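/- Let 0 < q < 1 and b > 0. If f, g : [0,b] → ℝ are both q-increasing or both q-decreasing and q-integrable on [0,b], then I_q(fg;0,b) ≥ (1/b)·I_q(f;0,b)·I_q(g;0,b). -/

import Mathlib

open scoped BigOperators
open Set

lemma cheb_finset (s : Finset ℕ) (w F G : ℕ → ℝ) (hw : ∀ n, 0 ≤ w n)
    (hmv : ∀ m n, 0 ≤ (F m - F n) * (G m - G n)) :
    (∑ n ∈ s, w n * F n) * (∑ n ∈ s, w n * G n) ≤
      (∑ n ∈ s, w n) * (∑ n ∈ s, w n * (F n * G n)) := by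
  have key : 0 ≤ ∑ m ∈ s, ∑ n ∈ s, w m * w n * ((F m - F n) * (G m - G n)) := by
    refine Finset.sum_nonneg fun m _ => Finset.sum_nonneg fun n _ => ?_
    exact mul_nonneg (mul_nonneg (hw m) (hw n)) (hmv m n)
  have inner : ∀ m : ℕ, ∑ n ∈ s, w m * w n * ((F m - F n) * (G m - G n)) =
      w m * (F m * G m) * (∑ n ∈ s, w n) - w m * F m * (∑ n ∈ s, w n * G n)
        - w m * G m * (∑ n ∈ s, w n * F n) + w m * (∑ n ∈ s, w n * (F n * G n)) := by
    intro m
    simp only [Finset.mul_sum, ← Finset.sum_sub_distrib, ← Finset.sum_add_distrib]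
    exact Finset.sum_congr rfl fun n _ => by ring
  have expand : ∑ m ∈ s, ∑ n ∈ s, w m * w n * ((F m - F n) * (G m - G n)) =
      2 * ((∑ n ∈ s, w n) * (∑ n ∈ s, w n * (F n * G n)) -
        (∑ n ∈ s, w n * F n) * (∑ n ∈ s, w n * G n)) := by
    simp only [inner]
    simp only [Finset.sum_add_distrib, Finset.sum_sub_distrib, ← Finset.sum_mul]
    ring
  rw [expand] at key
  linarith

theorem q_chebyshev_Iq (q b : ℝ) (f g : ℝ → ℝ)
    (hq0 : 0 < q) (hq1 : q < 1) (hb : 0 < b)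
    (hmono :
      ((∀ x ∈ Ioc (0:ℝ) b, f (q * x) ≤ f x) ∧ (∀ x ∈ Ioc (0:ℝ) b, g (q * x) ≤ g x)) ∨
      ((∀ x ∈ Ioc (0:ℝ) b, f x ≤ f (q * x)) ∧ (∀ x ∈ Ioc (0:ℝ) b, g x ≤ g (q * x))))
    (hsf : Summable (fun n : ℕ => f (b * q ^ n) * q ^ n))
    (hsg : Summable (fun n : ℕ => g (b * q ^ n) * q ^ n))
    (hsfg : Summable (fun n : ℕ => f (b * q ^ n) * g (b * q ^ n) * q ^ n)) :
    b * (1 - q) * ∑' n : ℕ, f (b * q ^ n) * g (b * q ^ n) * q ^ n ≥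
      (1 / b) * (b * (1 - q) * ∑' n : ℕ, f (b * q ^ n) * q ^ n) *
        (b * (1 - q) * ∑' n : ℕ, g (b * q ^ n) * q ^ n) := by
  set F : ℕ → ℝ := fun n => f (b * q ^ n) with hF
  set G : ℕ → ℝ := fun n => g (b * q ^ n) with hG
  set w : ℕ → ℝ := fun n => q ^ n with hw
  have hq1' : (0:ℝ) < 1 - q := by linarith
  have hmem : ∀ n : ℕ, b * q ^ n ∈ Ioc (0:ℝ) b := by
    intro n
    constructor
    · positivity
    · nlinarith [pow_le_one₀ hq0.le hq1.le (n := n)]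
  have hqpow : ∀ n : ℕ, q * (b * q ^ n) = b * q ^ (n + 1) := fun n => by ring
  have hmv : ∀ m n : ℕ, 0 ≤ (F m - F n) * (G m - G n) := by
    have step : ∀ m n : ℕ, (∀ x ∈ Ioc (0:ℝ) b, f (q * x) ≤ f x) →
        (∀ x ∈ Ioc (0:ℝ) b, g (q * x) ≤ g x) → 0 ≤ (F m - F n) * (G m - G n) := by
      intro m n hf hg
      have hFa : Antitone F := antitone_nat_of_succ_le fun k => by
        have := hf _ (hmem k); rwa [hqpow] at this
      have hGa : Antitone G := antitone_nat_of_succ_le fun k => by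
        have := hg _ (hmem k); rwa [hqpow] at this
      rcases le_total m n with h | h
      · nlinarith [hFa h, hGa h]
      · nlinarith [hFa h, hGa h]
    rcases hmono with ⟨hf, hg⟩ | ⟨hf, hg⟩
    · exact fun m n => step m n hf hg
    · intro m n
      have hFa : Monotone F := monotone_nat_of_le_succ fun k => by
        have := hf _ (hmem k); rwa [hqpow] at this
      have hGa : Monotone G := monotone_nat_of_le_succ fun k => by
        have := hg _ (hmem k); rwa [hqpow] at this
      rcases le_total m n with h | h
      · nlinarith [hFa h, hGa h]
      · nlinarith [hFa h, hGa h]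
  have hsw : Summable w := summable_geometric_of_lt_one hq0.le hq1
  have htw : ∑' n, w n = (1 - q)⁻¹ := tsum_geometric_of_lt_one hq0.le hq1
  -- Chebyshev for tsums via limits
  have key : (∑' n, F n * w n) * (∑' n, G n * w n) ≤
      (∑' n, w n) * (∑' n, F n * G n * w n) := by
    have h1 := hsf.hasSum.tendsto_sum_nat
    have h2 := hsg.hasSum.tendsto_sum_nat
    have h3 := hsfg.hasSum.tendsto_sum_nat
    have h4 := hsw.hasSum.tendsto_sum_nat
    refine le_of_tendsto_of_tendsto' (Filter.Tendsto.mul h1 h2) (Filter.Tendsto.mul h4 h3)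
      fun N => ?_
    have := cheb_finset (Finset.range N) w F G (fun n => by positivity) hmv
    simp only [mul_comm (w _)] at this
    convert this using 2 <;> exact Finset.sum_congr rfl fun n _ => by ring
  have key2 : (1 - q) * ((∑' n, F n * w n) * (∑' n, G n * w n)) ≤
      ∑' n, F n * G n * w n := by
    rw [htw] at key
    have e : (1 - q) * ((1 - q)⁻¹ * ∑' n, F n * G n * w n) = ∑' n, F n * G n * w n := by
      rw [← mul_assoc, mul_inv_cancel₀ (ne_of_gt hq1'), one_mul]
    calc (1 - q) * ((∑' n, F n * w n) * (∑' n, G n * w n))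
        ≤ (1 - q) * ((1 - q)⁻¹ * ∑' n, F n * G n * w n) :=
          mul_le_mul_of_nonneg_left key hq1'.le
      _ = _ := e
  have hbne : b ≠ 0 := ne_of_gt hb
  rw [ge_iff_le]
  have h := mul_le_mul_of_nonneg_left key2 (by positivity : (0:ℝ) ≤ b * (1 - q))
  calc (1 / b) * (b * (1 - q) * ∑' n, F n * w n) * (b * (1 - q) * ∑' n, G n * w n)
      = b * (1 - q) * ((1 - q) * ((∑' n, F n * w n) * (∑' n, G n * w n))) := by
        field_simp
    _ ≤ b * (1 - q) * ∑' n, F n * G n * w n := h
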